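/- The Kostka polynomials satisfy the duality K_{μ',(1^N)}(q) = q^{N(N−1)/2} · K_{μ,(1^N)}(q^{−1}) for every partition μ of N, where μ' is the conjugate partition. -/

import Mathlib

open Polynomial Finset
open scoped Classical

/-- `T k` is the cell (row, column) containing the entry `k` of a standard Young
tableau with `N` boxes, of shape `μ` (cells fit inside an `N × N` box). `IsSYT`
says that `T` is a bijection onto the cells of `μ` and that entries increase
along rows and down columns. -/
def IsSYT (N : ℕ) (μ : ℕ → ℕ) (T : Fin N → Fin N × Fin N) : Prop :=
  (∀ k, ((T k).2 : ℕ) < μ ((T k).1 : ℕ)) ∧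
  Function.Injective T ∧
  (∀ i j : Fin N, (j : ℕ) < μ (i : ℕ) → ∃ k, T k = (i, j)) ∧
  (∀ k l : Fin N, (T k).1 ≤ (T l).1 → (T k).2 ≤ (T l).2 → T k ≠ T l → k < l)

/-- Position of a cell in the reading word of the tableau (rows read from the
bottom row upwards, each row from left to right). -/
def readPos (N : ℕ) (μ : ℕ → ℕ) (c : Fin N × Fin N) : ℕ :=
  (∑ i ∈ Finset.Ico ((c.1 : ℕ) + 1) N, μ i) + (c.2 : ℕ)

/-- The charge indices of a standard word: `c_1 = 0`, and
`c_{r+1} = c_r + 1` exactly when the entry `r+1` lies to the right of the entry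
`r` in the reading word; `p r` is the position of entry `r`. -/
def chargeAux (p : ℕ → ℕ) : ℕ → ℕ
  | 0 => 0
  | r + 1 => chargeAux p r + (if p r < p (r + 1) then 1 else 0)

/-- The charge of a standard Young tableau: the sum of the charge indices of its
reading word. -/
noncomputable def charge (N : ℕ) (μ : ℕ → ℕ) (T : Fin N → Fin N × Fin N) : ℕ :=
  ∑ r ∈ Finset.range N,
    chargeAux (fun k => if h : k < N then readPos N μ (T ⟨k, h⟩) else 0) r

/-- The Kostka–Foulkes polynomial `K_{μ,(1^N)}(q) = Σ_{T ∈ SYT(μ)} q^{charge T}`. -/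
noncomputable def kostkaColumn (N : ℕ) (μ : ℕ → ℕ) : Polynomial ℤ :=
  ∑ T ∈ Finset.univ.filter (IsSYT N μ), Polynomial.X ^ charge N μ T

/-- The conjugate partition `μ'`: `μ'_j = #{i | μ_i > j}` (0-indexed). -/
def conjPart (N : ℕ) (μ : ℕ → ℕ) (j : ℕ) : ℕ :=
  ((Finset.range N).filter fun i => j < μ i).card

/-- The hook length of the (0-indexed) cell `(i,j)` of `μ`. -/
def hook (N : ℕ) (μ : ℕ → ℕ) (i j : ℕ) : ℕ :=
  μ i + conjPart N μ j - i - j - 1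

/-- transpose of a tableau -/
def transp (N : ℕ) (T : Fin N → Fin N × Fin N) : Fin N → Fin N × Fin N :=
  fun k => ((T k).2, (T k).1)

lemma transp_transp (N : ℕ) (T : Fin N → Fin N × Fin N) : transp N (transp N T) = T := by
  funext k; simp [transp]

lemma conj_lt_iff {N : ℕ} {μ : ℕ → ℕ} (hμ : Antitone μ) (i j : ℕ) :
    j < conjPart N μ i ↔ j < N ∧ i < μ j := by
  unfold conjPart
  constructor
  · intro h
    have hle : ((Finset.range N).filter fun i' => i < μ i').card ≤ N := by
      simpa using Finset.card_filter_le (Finset.range N) _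
    have hjN : j < N := lt_of_lt_of_le h hle
    refine ⟨hjN, ?_⟩
    by_contra hc
    push_neg at hc
    have hsub : (Finset.range N).filter (fun i' => i < μ i') ⊆ Finset.range j := by
      intro x hx
      simp only [Finset.mem_filter, Finset.mem_range] at hx ⊢
      by_contra hxj
      push_neg at hxj
      exact absurd (lt_of_lt_of_le hx.2 (le_trans (hμ hxj) hc)) (lt_irrefl i)
    have := Finset.card_le_card hsub
    simp only [Finset.card_range] at this
    omega
  · rintro ⟨hjN, hij⟩
    have hsub : Finset.range (j+1) ⊆ (Finset.range N).filter (fun i' => i < μ i') := by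
      intro x hx
      simp only [Finset.mem_range] at hx
      simp only [Finset.mem_filter, Finset.mem_range]
      exact ⟨by omega, lt_of_lt_of_le hij (hμ (by omega))⟩
    have := Finset.card_le_card hsub
    simp only [Finset.card_range] at this
    omega

lemma conj_antitone (N : ℕ) (μ : ℕ → ℕ) : Antitone (conjPart N μ) := by
  intro a b hab
  apply Finset.card_le_card
  intro x hx
  simp only [Finset.mem_filter] at hx ⊢
  exact ⟨hx.1, lt_of_le_of_lt hab hx.2⟩

lemma conj_conj {N : ℕ} {μ : ℕ → ℕ} (hμ : Antitone μ)
    (hsum : ∑ i ∈ Finset.range N, μ i = N) {j : ℕ} (hj : j < N) :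
    conjPart N (conjPart N μ) j = μ j := by
  have hμN : μ j ≤ N := by
    calc μ j ≤ ∑ i ∈ Finset.range N, μ i :=
      Finset.single_le_sum (fun i _ => Nat.zero_le _) (Finset.mem_range.2 hj)
    _ = N := hsum
  have hset : (Finset.range N).filter (fun i => j < conjPart N μ i) = Finset.range (μ j) := by
    ext x
    simp only [Finset.mem_filter, Finset.mem_range, conj_lt_iff hμ]
    constructor
    · rintro ⟨_, _, h⟩; exact h
    · intro h; exact ⟨lt_of_lt_of_le h hμN, hj, h⟩
  rw [conjPart, hset, Finset.card_range]

lemma IsSYT_congr {N : ℕ} {μ₁ μ₂ : ℕ → ℕ} (h : ∀ i < N, μ₁ i = μ₂ i)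
    {T : Fin N → Fin N × Fin N} (hT : IsSYT N μ₁ T) : IsSYT N μ₂ T := by
  obtain ⟨h1, h2, h3, h4⟩ := hT
  refine ⟨fun k => ?_, h2, fun i j hj => ?_, h4⟩
  · rw [← h _ (T k).1.isLt]; exact h1 k
  · exact h3 i j (by rw [h _ i.isLt]; exact hj)

lemma transp_isSYT {N : ℕ} {μ : ℕ → ℕ} (hμ : Antitone μ)
    {T : Fin N → Fin N × Fin N} (hT : IsSYT N μ T) : IsSYT N (conjPart N μ) (transp N T) := by
  obtain ⟨h1, h2, h3, h4⟩ := hT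
  refine ⟨fun k => ?_, fun a b hab => ?_, fun i j hj => ?_, fun k l ha hb hne => ?_⟩
  · exact (conj_lt_iff hμ _ _).2 ⟨(T k).1.isLt, h1 k⟩
  · apply h2
    have := congrArg Prod.fst hab
    have := congrArg Prod.snd hab
    simp only [transp] at *
    exact Prod.ext (by assumption) (by assumption)
  · obtain ⟨_, hij⟩ := (conj_lt_iff hμ _ _).1 hj
    obtain ⟨k, hk⟩ := h3 j i hij
    exact ⟨k, by simp [transp, hk]⟩
  · simp only [transp] at ha hb hne
    refine h4 k l hb ha fun hc => hne ?_
    rw [hc]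

lemma readPos_lt {N : ℕ} (μ : ℕ → ℕ) {a b : Fin N × Fin N}
    (ha : (a.2 : ℕ) < μ (a.1 : ℕ)) (h : (b.1 : ℕ) < (a.1 : ℕ)) :
    readPos N μ a < readPos N μ b := by
  unfold readPos
  have h1 : (b.1 : ℕ) + 1 ≤ (a.1 : ℕ) + 1 := by omega
  have h2 : (a.1 : ℕ) + 1 ≤ N := a.1.isLt
  have hsplit : (∑ i ∈ Finset.Ico ((b.1 : ℕ) + 1) ((a.1 : ℕ) + 1), μ i)
      + (∑ i ∈ Finset.Ico ((a.1 : ℕ) + 1) N, μ i)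
      = ∑ i ∈ Finset.Ico ((b.1 : ℕ) + 1) N, μ i :=
    Finset.sum_Ico_consecutive μ h1 h2
  have hmem : (a.1 : ℕ) ∈ Finset.Ico ((b.1 : ℕ) + 1) ((a.1 : ℕ) + 1) := by
    simp only [Finset.mem_Ico]; omega
  have hsingle : μ (a.1 : ℕ) ≤ ∑ i ∈ Finset.Ico ((b.1 : ℕ) + 1) ((a.1 : ℕ) + 1), μ i :=
    Finset.single_le_sum (fun i _ => Nat.zero_le _) hmem
  have hb2 : (0 : ℕ) ≤ (b.2 : ℕ) := Nat.zero_le _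
  omega

/-- Exclusivity: for consecutive entries exactly one of "row weakly up", "col weakly left". -/
lemma consec_excl {N : ℕ} {μ : ℕ → ℕ} (hμ : Antitone μ)
    {T : Fin N → Fin N × Fin N} (hT : IsSYT N μ T) {k l : Fin N} (hkl : (l : ℕ) = (k : ℕ) + 1) :
    ((T l).1 ≤ (T k).1 ↔ ¬ ((T l).2 ≤ (T k).2)) := by
  obtain ⟨h1, h2, h3, h4⟩ := hT
  have hne : T l ≠ T k := fun h => by
    have := congrArg Fin.val (h2 h)
    omega
  constructor
  · intro hr hc
    have := Fin.lt_def.mp (h4 l k hr hc hne)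
    omega
  · intro hc
    by_contra hr'
    have hrow : ((T k).1 : ℕ) < ((T l).1 : ℕ) := by
      simp only [Fin.le_def, not_le] at hr'
      exact hr'
    have hcol : ((T k).2 : ℕ) < ((T l).2 : ℕ) := by
      simp only [Fin.le_def, not_le] at hc
      exact hc
    have hcell : ((T l).2 : ℕ) < μ ((T k).1 : ℕ) :=
      lt_of_lt_of_le (h1 l) (hμ (le_of_lt hrow))
    obtain ⟨m, hm⟩ := h3 (T k).1 (T l).2 hcell
    have hm1 : (T m).1 = (T k).1 := by rw [hm]
    have hm2 : (T m).2 = (T l).2 := by rw [hm]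
    have hkm : k < m := by
      apply h4 k m (le_of_eq hm1.symm) (by rw [hm2]; exact le_of_lt hcol)
      intro h
      have := congrArg Prod.snd h
      rw [hm2] at this
      omega
    have hml : m < l := by
      apply h4 m l (by rw [hm1]; exact le_of_lt hrow) (le_of_eq hm2)
      intro h
      have := congrArg Prod.fst h
      rw [hm1] at this
      omega
    have := Fin.lt_def.mp hkm
    have := Fin.lt_def.mp hml
    omega

lemma ind_iff {N : ℕ} {μ : ℕ → ℕ} (hμ : Antitone μ)
    {T : Fin N → Fin N × Fin N} (hT : IsSYT N μ T) {k l : Fin N} (hkl : (l : ℕ) = (k : ℕ) + 1) :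
    (readPos N μ (T k) < readPos N μ (T l) ↔ (T l).1 ≤ (T k).1) := by
  obtain h1 := hT.1
  constructor
  · intro h
    by_contra hr
    simp only [Fin.le_def, not_le] at hr
    have := readPos_lt μ (h1 l) hr
    omega
  · intro hr
    rcases lt_or_eq_of_le hr with hlt | heq
    · exact readPos_lt μ (h1 k) hlt
    · have hcol : ((T k).2 : ℕ) < ((T l).2 : ℕ) := by
        have := (consec_excl hμ hT hkl).1 hr
        simp only [Fin.le_def, not_le] at this
        exact this
      unfold readPos
      have : ((T l).1 : ℕ) = ((T k).1 : ℕ) := by rw [heq]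
      rw [this]
      omega

lemma charge_add {N : ℕ} {μ : ℕ → ℕ} (hμ : Antitone μ)
    {T : Fin N → Fin N × Fin N} (hT : IsSYT N μ T) :
    charge N (conjPart N μ) (transp N T) + charge N μ T = N * (N - 1) / 2 := by
  set p : ℕ → ℕ := fun k => if h : k < N then readPos N μ (T ⟨k, h⟩) else 0 with hp
  set p' : ℕ → ℕ :=
    fun k => if h : k < N then readPos N (conjPart N μ) (transp N T ⟨k, h⟩) else 0 with hp'
  have hT' : IsSYT N (conjPart N μ) (transp N T) := transp_isSYT hμ hT
  have key : ∀ r, r < N → chargeAux p' r + chargeAux p r = r := by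
    intro r
    induction r with
    | zero => intro _; simp [chargeAux]
    | succ r ih =>
      intro hr
      have hrN : r < N := by omega
      set k : Fin N := ⟨r, hrN⟩ with hk
      set l : Fin N := ⟨r + 1, hr⟩ with hl
      have hkl : (l : ℕ) = (k : ℕ) + 1 := rfl
      have hpk : p r = readPos N μ (T k) := by rw [hp]; simp [hrN]; rfl
      have hpl : p (r + 1) = readPos N μ (T l) := by rw [hp]; simp [hr]; rfl
      have hpk' : p' r = readPos N (conjPart N μ) (transp N T k) := by rw [hp']; simp [hrN]; rfl
      have hpl' : p' (r + 1) = readPos N (conjPart N μ) (transp N T l) := by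
        rw [hp']; simp [hr]; rfl
      have hiff : (p r < p (r + 1)) ↔ (T l).1 ≤ (T k).1 := by
        rw [hpk, hpl]; exact ind_iff hμ hT hkl
      have hiff' : (p' r < p' (r + 1)) ↔ ¬ ((T l).1 ≤ (T k).1) := by
        rw [hpk', hpl']
        rw [ind_iff (conj_antitone N μ) hT' hkl]
        show (T l).2 ≤ (T k).2 ↔ _
        rw [consec_excl hμ hT hkl]
        tauto
      have h1 : chargeAux p' (r + 1) = chargeAux p' r + (if p' r < p' (r + 1) then 1 else 0) :=
        rfl
      have h2 : chargeAux p (r + 1) = chargeAux p r + (if p r < p (r + 1) then 1 else 0) :=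
        rfl
      rw [h1, h2]
      by_cases hc : (T l).1 ≤ (T k).1
      · have e1 : (if p r < p (r + 1) then 1 else 0) = 1 := if_pos (hiff.2 hc)
        have e2 : (if p' r < p' (r + 1) then 1 else 0) = 0 :=
          if_neg (fun h => (hiff'.1 h) hc)
        rw [e1, e2]
        have := ih hrN
        omega
      · have e1 : (if p r < p (r + 1) then 1 else 0) = 0 :=
          if_neg (fun h => hc (hiff.1 h))
        have e2 : (if p' r < p' (r + 1) then 1 else 0) = 1 := if_pos (hiff'.2 hc)
        rw [e1, e2]
        have := ih hrN
        omega
  have : charge N (conjPart N μ) (transp N T) + charge N μ T = ∑ r ∈ Finset.range N, r := by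
    unfold charge
    rw [← Finset.sum_add_distrib]
    exact Finset.sum_congr rfl fun r hr => key r (Finset.mem_range.1 hr)
  rw [this, Finset.sum_range_id]

/-- Duality of Kostka polynomials:
`K_{μ',(1^N)}(q) = q^{N(N-1)/2} · K_{μ,(1^N)}(q⁻¹)` for every partition `μ` of
`N`, where `μ'` is the conjugate partition.  Since
`K_{μ,(1^N)}(q) = Σ_{T∈SYT(μ)} q^{charge T}`, the right-hand side is
`Σ_{T∈SYT(μ)} q^{N(N-1)/2 - charge T}`. -/
theorem kostka_conjugate_duality (N : ℕ) (μ : ℕ → ℕ) (hμ : Antitone μ)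
    (hsum : ∑ i ∈ Finset.range N, μ i = N) (hzero : ∀ i, N ≤ i → μ i = 0) :
    kostkaColumn N (conjPart N μ) =
      ∑ T ∈ Finset.univ.filter (IsSYT N μ),
        (Polynomial.X : Polynomial ℤ) ^ (N * (N - 1) / 2 - charge N μ T) := by
  rw [kostkaColumn]
  refine Finset.sum_nbij' (transp N) (transp N) ?_ ?_ ?_ ?_ ?_
  · intro T' hT'
    simp only [Finset.mem_filter, Finset.mem_univ, true_and] at hT' ⊢
    exact IsSYT_congr (fun i hi => conj_conj hμ hsum hi)
      (transp_isSYT (conj_antitone N μ) hT')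
  · intro T hT
    simp only [Finset.mem_filter, Finset.mem_univ, true_and] at hT ⊢
    exact transp_isSYT hμ hT
  · intro T' _; exact transp_transp N T'
  · intro T _; exact transp_transp N T
  · intro T' hT'
    simp only [Finset.mem_filter, Finset.mem_univ, true_and] at hT'
    have hS : IsSYT N μ (transp N T') :=
      IsSYT_congr (fun i hi => conj_conj hμ hsum hi)
        (transp_isSYT (conj_antitone N μ) hT')
    have := charge_add hμ hS
    rw [transp_transp] at this
    congr 1
    omega
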